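/- Let k ≥ 1 and n ≥ 2 be integers. For every T ∈ T_n^k, the reduced tableau red(T) belongs to T_{n−1}^k. -/

import Mathlib

open scoped Classical

/-- Number of North steps (letters `true`) among the first `i` letters of `w`. -/
def upCount (w : List Bool) (i : ℕ) : ℕ := (w.take i).count true

/-- Number of East steps (letters `false`) among the first `i` letters of `w`. -/
def rightCount (w : List Bool) (i : ℕ) : ℕ := (w.take i).count false

/-- `w` is an `(m,n)`-Dyck path: a word with `n` North letters (`true`) and `m` East
letters (`false`), each of whose prefixes with `b` North and `a` East letters
satisfies `b*m - a*n ≥ 0`. -/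
def IsDyck (m n : ℕ) (w : List Bool) : Prop :=
  w.length = m + n ∧ w.count true = n ∧
  ∀ i, n * rightCount w i ≤ m * upCount w i

/-- The rank of the `(i+1)`-st step (0-indexed `i`) of `w`, namely `b*m - a*n` where
`b` and `a` are the numbers of North and East letters among the first `i` letters. -/
def rank (m n : ℕ) (w : List Bool) (i : ℕ) : ℤ :=
  (m : ℤ) * upCount w i - (n : ℤ) * rightCount w i

/-- The sweep map: list the steps of `w` in increasing order of their ranks. -/
def sweep (m n : ℕ) (w : List Bool) : List Bool :=
  (((List.range w.length).mergeSort
      (fun i j => decide (rank m n w i ≤ rank m n w j))).map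
    (fun i => w.getD i false))

/-- The word `EN(w)`: list the steps of `w` in increasing order of their end ranks
(the end rank of the `(i+1)`-st step is `rank w (i+1)`). -/
def sweepEN (m n : ℕ) (w : List Bool) : List Bool :=
  (((List.range w.length).mergeSort
      (fun i j => decide (rank m n w (i + 1) ≤ rank m n w (j + 1)))).map
    (fun i => w.getD i false))

/-- One step of the filling algorithm: place entry `p.1` according to letter `p.2`
(`true` = S : start a new column; `false` = W : put it below the smallest active
entry, an active entry being the current bottom entry of a column of height `< k+1`). -/
def fillStep (k : ℕ) (cols : List (List ℕ)) (p : ℕ × Bool) : List (List ℕ) :=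
  if p.2 then cols ++ [[p.1]]
  else
    match ((List.range cols.length).filter
        (fun j => (cols.getD j []).length < k + 1)).argmin
        (fun j => (cols.getD j []).getLastD 0) with
    | none => cols
    | some j => cols.set j ((cols.getD j []) ++ [p.1])

/-- The state (list of columns, each recorded top to bottom) of the filling algorithm
after the entries `1, …, t` have been placed according to the first `t` letters of `w`. -/
def fillColsUpTo (k : ℕ) (w : List Bool) (t : ℕ) : List (List ℕ) :=
  ((List.range t).map (fun i => (i + 1, w.getD i false))).foldl (fillStep k) []

/-- The final state of the filling algorithm on the word `w` (entries
`1, …, m+n-1` placed, i.e. all letters but the last one processed). -/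
def fillCols (k : ℕ) (w : List Bool) : List (List ℕ) :=
  fillColsUpTo k w (w.length - 1)

/-- The tableau `T(D)` produced by the filling algorithm, as a function
(row, column) ↦ entry, rows and columns 0-indexed. -/
def fillTableau (k n : ℕ) (w : List Bool) : Fin (k + 1) → Fin n → ℕ :=
  fun i j => ((fillCols k w).getD j []).getD i 0

/-- `T` fills the `(k+1) × n` array with `1, …, (k+1)n`, increasing along rows and
columns. -/
def IsFilling (k n : ℕ) (T : Fin (k + 1) → Fin n → ℕ) : Prop :=
  (∀ i j, T i j ∈ Finset.Icc 1 ((k + 1) * n)) ∧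
  Function.Injective (fun p : Fin (k + 1) × Fin n => T p.1 p.2) ∧
  (∀ i, StrictMono (T i)) ∧
  (∀ j, StrictMono (fun i => T i j))

/-- For all entries `a < b < c < d` of `T` with `d` directly below `a`, the entries
`b` and `c` do not lie in the same column. -/
def NoBadQuadruple (k n : ℕ) (T : Fin (k + 1) → Fin n → ℕ) : Prop :=
  ∀ (i : Fin (k + 1)) (hi : (i : ℕ) + 1 < k + 1) (j : Fin n)
    (r r' : Fin (k + 1)) (c : Fin n), r < r' →
      ¬ (T i j < T r c ∧ T r c < T r' c ∧ T r' c < T ⟨(i : ℕ) + 1, hi⟩ j)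

/-- The family `𝒯ₙᵏ` of tableaux. -/
def IsFussTableau (k n : ℕ) (T : Fin (k + 1) → Fin n → ℕ) : Prop :=
  IsFilling k n T ∧ NoBadQuadruple k n T

/-- A value `r` is marked for `T` when `r - 1` is a bottom-row entry of `T`. -/
def Marked (k n : ℕ) (T : Fin (k + 1) → Fin n → ℕ) (r : ℕ) : Prop :=
  ∃ j : Fin n, T (Fin.last k) j + 1 = r

/-- One move of the walk `w(T)` on the values `1, …, M` (where `M = m + n`):
from a row-1 entry `x` move to `r + 1` where `r` is the bottom entry of the column
of `x`; from an entry `x` of one of the rows `2, …, k+1` move to the largest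
unmarked value `≤ r`, where `r` is the entry directly above `x`; from `x = M`
move to the largest unmarked value `< M`. -/
noncomputable def walkStep (k n M : ℕ) (T : Fin (k + 1) → Fin n → ℕ) (x : ℕ) : ℕ :=
  if h : ∃ j : Fin n, T 0 j = x then
    T (Fin.last k) (Classical.choose h) + 1
  else if h2 : ∃ p : Fin (k + 1) × Fin n, T p.1 p.2 = x then
    let p := Classical.choose h2
    ((((Finset.Icc 1 M).filter
        (fun y => y ≤ T (⟨(p.1 : ℕ) - 1, lt_of_le_of_lt (Nat.sub_le _ _) p.1.2⟩ : Fin (k + 1)) p.2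
          ∧ ¬ Marked k n T y))).max).getD 0
  else
    ((((Finset.Icc 1 M).filter (fun y => y < M ∧ ¬ Marked k n T y))).max).getD 0

/-- The area of the path `w`: the number of lattice cells of the `m × n` rectangle
lying below the path whose interiors lie entirely above the diagonal.
The cell in column `x` and row `y` (0-indexed) has its interior above the diagonal
iff `n*(x+1) ≤ m*y`, and lies below the path iff the `(y+1)`-st North step of `w`
occurs before the `(x+1)`-st East step. -/
def nthLetterIdx (w : List Bool) (b : Bool) (j : ℕ) : ℕ :=
  (((List.range w.length).filter (fun i => w.getD i false = b))).getD j 0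

def area (m n : ℕ) (w : List Bool) : ℕ :=
  ((Finset.range m ×ˢ Finset.range n).filter
    (fun p => n * (p.1 + 1) ≤ m * p.2 ∧
      nthLetterIdx w true p.2 < nthLetterIdx w false p.1)).card

/-- The reduction `red(T)`: delete column 1 and replace each remaining entry `i` by
`i` minus the number of column-1 entries smaller than `i`. -/
def red (k n : ℕ) (T : Fin (k + 1) → Fin n → ℕ) : Fin (k + 1) → Fin (n - 1) → ℕ :=
  fun i j =>
    let v := T i ⟨(j : ℕ) + 1, by have := j.2; omega⟩
    v - (Finset.univ.filter
      (fun u : Fin (k + 1) => T u ⟨0, by have := j.2; omega⟩ < v)).card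

/-- The (finite) set of `(m,n)`-Dyck paths as a `Finset` of words. -/
noncomputable def dyckFinset (m n : ℕ) : Finset (List Bool) :=
  ((Finset.univ : Finset (Fin (m + n) → Bool)).image List.ofFn).filter
    (fun w => IsDyck m n w)

/-- For `k ≥ 1`, `n ≥ 2` and `T ∈ 𝒯ₙᵏ`, the reduced tableau
`red(T)` belongs to `𝒯_{n-1}ᵏ`. -/
theorem statement14 (k n : ℕ) (hk : 1 ≤ k) (hn : 2 ≤ n)
    (T : Fin (k + 1) → Fin n → ℕ) (hT : IsFussTableau k n T) :
    IsFussTableau k (n - 1) (red k n T) := by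
  obtain ⟨⟨hrange, hinj, hrow, hcol⟩, hquad⟩ := hT
  have hz : (0:ℕ) < n := by omega
  set z : Fin n := ⟨0, hz⟩ with hzdef
  set C : ℕ → ℕ := fun v =>
    (Finset.univ.filter (fun u : Fin (k + 1) => T u z < v)).card with hCdef
  set J : Fin (n-1) → Fin n := fun j => ⟨(j:ℕ)+1, by have := j.2; omega⟩ with hJdef
  have h1le : ∀ i j, 1 ≤ T i j := fun i j => (Finset.mem_Icc.mp (hrange i j)).1
  have hleN : ∀ i j, T i j ≤ (k+1)*n := fun i j => (Finset.mem_Icc.mp (hrange i j)).2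
  have hredeq : ∀ (i : Fin (k+1)) (j : Fin (n-1)),
      red k n T i j = T i (J j) - C (T i (J j)) := fun i j => rfl
  have himg : Finset.image (fun p : Fin (k+1) × Fin n => T p.1 p.2) Finset.univ
      = Finset.Icc 1 ((k+1)*n) := by
    apply Finset.eq_of_subset_of_card_le
    · intro m hm
      obtain ⟨p, -, rfl⟩ := Finset.mem_image.mp hm
      exact hrange p.1 p.2
    · rw [Finset.card_image_of_injective _ hinj, Nat.card_Icc, Finset.card_univ]
      simp
  have hsurj : ∀ m, 1 ≤ m → m ≤ (k+1)*n → ∃ p : Fin (k+1) × Fin n, T p.1 p.2 = m := by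
    intro m h1 h2
    have hm : m ∈ Finset.Icc 1 ((k+1)*n) := Finset.mem_Icc.mpr ⟨h1, h2⟩
    rw [← himg] at hm
    obtain ⟨p, -, hp⟩ := Finset.mem_image.mp hm
    exact ⟨p, hp⟩
  have hinjcol : ∀ u u' : Fin (k+1), T u z = T u' z → u = u' := by
    intro u u' h
    have := hinj (a₁ := (u, z)) (a₂ := (u', z)) h
    exact congrArg Prod.fst this
  have hC_lt : ∀ a, C a ≤ a - 1 := by
    intro a
    have := Finset.card_le_card_of_injOn (fun u : Fin (k+1) => T u z)
      (s := Finset.univ.filter (fun u : Fin (k+1) => T u z < a)) (t := Finset.Ico 1 a)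
      (by intro u hu
          simp only [Finset.mem_coe, Finset.mem_filter] at hu
          exact Finset.mem_Ico.mpr ⟨h1le u z, hu.2⟩)
      (by intro u _ u' _ h
          exact hinjcol u u' h)
    simpa [hCdef, Nat.card_Ico] using this
  have hCmono : ∀ a b, a ≤ b → C a ≤ C b := by
    intro a b hab
    apply Finset.card_le_card
    intro u hu
    simp only [Finset.mem_filter] at hu ⊢
    exact ⟨hu.1, lt_of_lt_of_le hu.2 hab⟩
  have hCdiff : ∀ a b, (∀ u, T u z ≠ a) → a < b → C b ≤ C a + (b - a - 1) := by
    intro a b ha hab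
    have hsub : (Finset.univ.filter (fun u : Fin (k+1) => T u z < b)) ⊆
        (Finset.univ.filter (fun u : Fin (k+1) => T u z < a)) ∪
        (Finset.univ.filter (fun u : Fin (k+1) => a < T u z ∧ T u z < b)) := by
      intro u hu
      simp only [Finset.mem_filter, Finset.mem_union, Finset.mem_univ, true_and] at hu ⊢
      rcases lt_or_ge (T u z) a with h | h
      · exact Or.inl h
      · exact Or.inr ⟨lt_of_le_of_ne h (Ne.symm (ha u)), hu⟩
    have h2 : (Finset.univ.filter (fun u : Fin (k+1) => a < T u z ∧ T u z < b)).card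
        ≤ b - a - 1 := by
      have := Finset.card_le_card_of_injOn (fun u : Fin (k+1) => T u z)
        (s := Finset.univ.filter (fun u : Fin (k+1) => a < T u z ∧ T u z < b))
        (t := Finset.Ioo a b)
        (by intro u hu
            simp only [Finset.mem_coe, Finset.mem_filter] at hu
            exact Finset.mem_Ioo.mpr hu.2)
        (by intro u _ u' _ h; exact hinjcol u u' h)
      simpa [Nat.card_Ioo] using this
    have h3 := le_trans (Finset.card_le_card hsub) (Finset.card_union_le _ _)
    simp only [hCdef]
    omega
  have redmono : ∀ a b, (∀ u, T u z ≠ a) → 1 ≤ a → a < b → a - C a < b - C b := by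
    intro a b ha h1 hab
    have h2 := hC_lt a
    have h3 := hCdiff a b ha hab
    have h4 := hCmono a b (le_of_lt hab)
    omega
  have hrev : ∀ a b, (∀ u, T u z ≠ b) → 1 ≤ b → a - C a < b - C b → a < b := by
    intro a b hb h1 h
    by_contra hc
    push_neg at hc
    rcases eq_or_lt_of_le hc with rfl | hlt
    · omega
    · have := redmono b a hb h1 hlt
      omega
  have hnz : ∀ (i : Fin (k+1)) (j : Fin (n-1)) (u : Fin (k+1)), T u z ≠ T i (J j) := by
    intro i j u h
    have heq := hinj (a₁ := (u, z)) (a₂ := (i, J j)) h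
    have h2 : z = J j := congrArg Prod.snd heq
    have h3 : (0:ℕ) = (j:ℕ)+1 := congrArg Fin.val h2
    omega
  -- upper bound
  have hmul : (k+1)*n = (k+1)*(n-1) + (k+1) := by
    have h : n = (n-1)+1 := by omega
    calc (k+1)*n = (k+1)*((n-1)+1) := by rw [← h]
      _ = (k+1)*(n-1) + (k+1) := by ring
  have hub : ∀ (i : Fin (k+1)) (j : Fin (n-1)),
      T i (J j) ≤ C (T i (J j)) + (k+1)*(n-1) := by
    intro i j
    set v := T i (J j) with hv
    have hv1 : 1 ≤ v := h1le _ _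
    have hvN : v ≤ (k+1)*n := hleN _ _
    clear_value v
    set A := Finset.univ.filter (fun q : Fin (k+1) × Fin n => T q.1 q.2 < v) with hA
    have hcardA : A.card = v - 1 := by
      have himg2 : A.image (fun p : Fin (k+1) × Fin n => T p.1 p.2) = Finset.Ico 1 v := by
        ext m
        simp only [Finset.mem_image, Finset.mem_Ico, hA, Finset.mem_filter,
          Finset.mem_univ, true_and]
        constructor
        · rintro ⟨p, hp, rfl⟩; exact ⟨h1le _ _, hp⟩
        · rintro ⟨h1, h2⟩
          obtain ⟨p, hp⟩ := hsurj m h1 (le_trans (le_of_lt h2) hvN)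
          exact ⟨p, by omega, hp⟩
      have := Finset.card_image_of_injective A hinj
      rw [himg2, Nat.card_Ico] at this
      omega
    have hBsub : A ⊆ ((Finset.univ.filter (fun u : Fin (k+1) => T u z < v)).image
        (fun u => (u, z))) ∪ ((Finset.univ ×ˢ (Finset.univ.erase z)).erase (i, J j)) := by
      intro q hq
      simp only [hA, Finset.mem_filter, Finset.mem_univ, true_and] at hq
      rw [Finset.mem_union]
      by_cases h2 : q.2 = z
      · left
        rw [Finset.mem_image]
        refine ⟨q.1, ?_, Prod.ext rfl h2.symm⟩
        simp only [Finset.mem_filter, Finset.mem_univ, true_and]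
        rw [← h2]; exact hq
      · right
        rw [Finset.mem_erase]
        constructor
        · intro hqe
          rw [hqe] at hq
          have hq' : T i (J j) < v := hq
          omega
        · rw [Finset.mem_product]
          exact ⟨Finset.mem_univ _, Finset.mem_erase.mpr ⟨h2, Finset.mem_univ _⟩⟩
    have hcard0 : ((Finset.univ.filter (fun u : Fin (k+1) => T u z < v)).image
        (fun u => (u, z))).card = C v := by
      rw [Finset.card_image_of_injective _
        (fun a b h => by simpa using congrArg Prod.fst h)]
    have hmemp : (i, J j) ∈ Finset.univ ×ˢ (Finset.univ.erase z) := by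
      rw [Finset.mem_product]
      refine ⟨Finset.mem_univ _, Finset.mem_erase.mpr ⟨?_, Finset.mem_univ _⟩⟩
      intro h
      have := congrArg Fin.val h
      simp only [hJdef] at this
      simp [hzdef] at this
    have hcard1 : ((Finset.univ ×ˢ (Finset.univ.erase z)).erase (i, J j)).card
        = (k+1)*(n-1) - 1 := by
      rw [Finset.card_erase_of_mem hmemp, Finset.card_product,
        Finset.card_erase_of_mem (Finset.mem_univ z), Finset.card_univ, Finset.card_univ]
      simp
    have hle := le_trans (Finset.card_le_card hBsub) (Finset.card_union_le _ _)
    rw [hcard0, hcard1, hcardA] at hle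
    have hpos : 0 < (k+1)*(n-1) := Nat.mul_pos (by omega) (by omega)
    obtain ⟨P, hP⟩ : ∃ P, (k+1)*(n-1) = P := ⟨_, rfl⟩
    rw [hP] at hle hpos ⊢
    obtain ⟨cc, hcc⟩ : ∃ cc, C v = cc := ⟨_, rfl⟩
    rw [hcc] at hle ⊢
    obtain ⟨vv, hvv⟩ : ∃ vv, v = vv := ⟨_, rfl⟩
    rw [hvv] at hv1 hle ⊢
    omega
  refine ⟨⟨?_, ?_, ?_, ?_⟩, ?_⟩
  · intro i j
    rw [hredeq]
    have h1 := hC_lt (T i (J j))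
    have h2 := h1le i (J j)
    have h3 := hub i j
    exact Finset.mem_Icc.mpr ⟨by omega, by omega⟩
  · rintro ⟨p1, p2⟩ ⟨q1, q2⟩ h
    simp only at h
    rw [hredeq p1 p2, hredeq q1 q2] at h
    rcases lt_trichotomy (T p1 (J p2)) (T q1 (J q2)) with hlt | heq | hlt
    · exact absurd h (ne_of_lt (redmono _ _ (hnz p1 p2) (h1le _ _) hlt))
    · have heq2 := hinj (a₁ := (p1, J p2)) (a₂ := (q1, J q2)) heq
      have h1 : p1 = q1 := congrArg Prod.fst heq2
      have h2 : J p2 = J q2 := congrArg Prod.snd heq2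
      have h3 : p2 = q2 := by
        have := congrArg Fin.val h2
        simp only [hJdef] at this
        exact Fin.ext (by omega)
      rw [h1, h3]
    · exact absurd h.symm (ne_of_lt (redmono _ _ (hnz q1 q2) (h1le _ _) hlt))
  · intro i j j' hlt
    rw [hredeq i j, hredeq i j']
    have hJlt : J j < J j' := by
      simp only [hJdef, Fin.mk_lt_mk]
      have : (j:ℕ) < (j':ℕ) := hlt
      omega
    exact redmono _ _ (hnz i j) (h1le _ _) (hrow i hJlt)
  · intro j i i' hlt
    simp only []
    rw [hredeq i j, hredeq i' j]
    exact redmono _ _ (hnz i j) (h1le _ _) (hcol (J j) hlt)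
  · intro i hi j r r' c hrr habs
    obtain ⟨h1, h2, h3⟩ := habs
    rw [hredeq i j, hredeq r c] at h1
    rw [hredeq r c, hredeq r' c] at h2
    rw [hredeq r' c, hredeq ⟨(i:ℕ)+1, hi⟩ j] at h3
    have H1 : T i (J j) < T r (J c) := hrev _ _ (hnz r c) (h1le _ _) h1
    have H2 : T r (J c) < T r' (J c) := hrev _ _ (hnz r' c) (h1le _ _) h2
    have H3 : T r' (J c) < T ⟨(i:ℕ)+1, hi⟩ (J j) := hrev _ _ (hnz _ j) (h1le _ _) h3
    exact hquad i hi (J j) r r' (J c) hrr ⟨H1, H2, H3⟩
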